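/- With U the (n+1)×(n+1) matrix defined from z ∈ ℂ, |z| ≤ 1 (U₁₁ = z, U₂₁ = √(1-|z|²), U_{1,n+1} = √(1-|z|²), U_{2,n+1} = -conj(z), U_{k+1,k} = 1 for 2 ≤ k ≤ n, zeros elsewhere), the (1,1) entry of U^k equals z^k for every k = 0, 1, …, n. -/

import Mathlib

open Matrix

noncomputable def sneakyU (n : ℕ) (z : ℂ) : Matrix (Fin (n + 1)) (Fin (n + 1)) ℂ :=
  fun i j =>
    if i = 0 ∧ j = 0 then z
    else if i = 1 ∧ j = 0 then (Real.sqrt (1 - ‖z‖ ^ 2) : ℂ)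
    else if i = 0 ∧ j = Fin.last n then (Real.sqrt (1 - ‖z‖ ^ 2) : ℂ)
    else if i = 1 ∧ j = Fin.last n then -(starRingEnd ℂ z)
    else if 2 ≤ (i : ℕ) ∧ (j : ℕ) + 1 = (i : ℕ) then 1
    else 0

lemma sneakyU_key (n : ℕ) (hn : 1 ≤ n) (z : ℂ) :
    ∀ k, k ≤ n → ∀ i : Fin (n + 1),
      ((sneakyU n z) ^ k) i 0 =
        if (i : ℕ) = 0 then z ^ k
        else if (i : ℕ) ≤ k then (Real.sqrt (1 - ‖z‖ ^ 2) : ℂ) * z ^ (k - (i : ℕ))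
        else 0 := by
  have h01 : (0 : Fin (n + 1)).val = 0 := rfl
  have h1v : (1 : Fin (n + 1)).val = 1 := by
    simp [Fin.val_one', Nat.mod_eq_of_lt (by omega : 1 < n + 1)]
  intro k
  induction k with
  | zero =>
    intro _ i
    simp only [pow_zero, Matrix.one_apply, Nat.le_zero]
    by_cases hi : (i : ℕ) = 0
    · have : i = 0 := Fin.ext hi
      simp [this]
    · have : i ≠ 0 := fun h => hi (by simp [h])
      simp [this, hi]
  | succ k IH =>
    intro hk i
    have hk' : k ≤ n := Nat.le_of_succ_le hk
    have ihs := IH hk'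
    rw [pow_succ', Matrix.mul_apply]
    simp only [ihs]
    have hlastval : (Fin.last n : Fin (n+1)).val = n := rfl
    by_cases h0 : (i : ℕ) = 0
    · rw [Finset.sum_eq_single (0 : Fin (n + 1))]
      · have : i = 0 := Fin.ext h0
        subst this
        simp [sneakyU, pow_succ, mul_comm]
      · intro b _ hb
        have hb0 : (b : ℕ) ≠ 0 := fun h => hb (Fin.ext h)
        by_cases hbl : b = Fin.last n
        · have hn0 : ¬((b : ℕ) = 0) := hb0
          have hnk : ¬((b : ℕ) ≤ k) := by subst hbl; rw [hlastval]; omega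
          simp [hn0, hnk]
        · have : sneakyU n z i b = 0 := by
            have hi0 : i = 0 := Fin.ext h0
            simp only [sneakyU, hi0]
            rw [if_neg (by tauto), if_neg, if_neg (by tauto), if_neg, if_neg]
            · rintro ⟨h2, -⟩; rw [h01] at h2; omega
            · rintro ⟨h2, -⟩
              have := congrArg Fin.val h2
              rw [h01, h1v] at this; omega
            · rintro ⟨h2, -⟩
              have := congrArg Fin.val h2
              rw [h01, h1v] at this; omega
          rw [this, zero_mul]
      · simp
    · by_cases h1 : (i : ℕ) = 1
      · rw [Finset.sum_eq_single (0 : Fin (n + 1))]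
        · have hi1 : i = 1 := Fin.ext (by rw [h1v]; exact h1)
          subst hi1
          have c1 : ¬((1 : Fin (n+1)) = 0 ∧ (0 : Fin (n+1)) = 0) := by
            rintro ⟨h2, -⟩
            have := congrArg Fin.val h2
            rw [h01, h1v] at this; omega
          have hne10 : (1 : Fin (n + 1)) ≠ 0 := fun h => by
            have := congrArg Fin.val h; rw [h1v, h01] at this; omega
          rw [show sneakyU n z 1 0 = (Real.sqrt (1 - ‖z‖ ^ 2) : ℂ) by
            simp [sneakyU, hne10]]
          rw [h01, h1v, if_pos rfl, if_neg one_ne_zero, if_pos (by omega)]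
          norm_num
        · intro b _ hb
          have hb0 : (b : ℕ) ≠ 0 := fun h => hb (Fin.ext h)
          have hbne : ¬(b = 0) := hb
          have hine0 : ¬(i = 0) := fun h => h0 (by simp [h])
          by_cases hbl : b = Fin.last n
          · have hnk : ¬((b : ℕ) ≤ k) := by subst hbl; rw [hlastval]; omega
            simp [hb0, hnk]
          · have : sneakyU n z i b = 0 := by
              simp only [sneakyU]
              rw [if_neg (by tauto), if_neg (by tauto), if_neg (by tauto),
                if_neg (by tauto), if_neg]
              rintro ⟨h2, -⟩; omega
            rw [this, zero_mul]
        · simp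
      · -- 2 ≤ i
        have h2i : 2 ≤ (i : ℕ) := by omega
        have hjlt : (i : ℕ) - 1 < n + 1 := by omega
        set j0 : Fin (n + 1) := ⟨(i : ℕ) - 1, hjlt⟩ with hj0
        have hj0v : (j0 : ℕ) = (i : ℕ) - 1 := rfl
        rw [Finset.sum_eq_single j0]
        · have hine0 : ¬(i = 0) := fun h => h0 (by simp [h])
          have hine1 : ¬(i = 1) := fun h => h1 (by rw [h]; exact h1v)
          have hcond : 2 ≤ (i : ℕ) ∧ (j0 : ℕ) + 1 = (i : ℕ) := ⟨h2i, by rw [hj0v]; omega⟩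
          have hU : sneakyU n z i j0 = 1 := by
            simp only [sneakyU]
            rw [if_neg (by tauto), if_neg (by tauto), if_neg (by tauto),
              if_neg (by tauto), if_pos hcond]
          rw [hU, one_mul]
          simp only [hj0, Fin.val_mk]
          rw [if_neg (by omega), if_neg h0]
          by_cases hle : (i : ℕ) ≤ k + 1
          · rw [if_pos (by omega), if_pos hle]
            congr 1
            exact congrArg (fun m => z ^ m)
              (by omega : k - ((i : ℕ) - 1) = k + 1 - (i : ℕ))
          · rw [if_neg (by omega), if_neg hle]
        · intro b _ hb
          have hine0 : ¬(i = 0) := fun h => h0 (by simp [h])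
          have hine1 : ¬(i = 1) := fun h => h1 (by rw [h]; exact h1v)
          have : sneakyU n z i b = 0 := by
            simp only [sneakyU]
            rw [if_neg (by tauto), if_neg (by tauto), if_neg (by tauto),
              if_neg (by tauto), if_neg]
            rintro ⟨-, h3⟩
            exact hb (Fin.ext (by rw [hj0v]; omega))
          rw [this, zero_mul]
        · simp

theorem sneakyU_pow_entry (n : ℕ) (hn : 1 ≤ n) (z : ℂ) (hz : ‖z‖ ≤ 1)
    (k : ℕ) (hk : k ≤ n) :
    ((sneakyU n z) ^ k) 0 0 = z ^ k := by
  have := sneakyU_key n hn z k hk 0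
  simpa using this
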